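/- arXiv:1904.05406 — 2 statements merged into one kernel-verified Lean document; each statement's English description precedes it below -/
import Mathlib

section
/- Every permutation of a finite set can be written as the composition of two cyclic permutations (where a cyclic permutation is one whose non-fixed points form a single cycle, or the identity). -/
open Equiv Equiv.Perm Finset

section Aux

variable {α : Type*} [Fintype α] [DecidableEq α]

theorem Equiv.Perm.apply_inv_self (f : Equiv.Perm α) (x : α) : f (f⁻¹ x) = x :=
  Equiv.apply_symm_apply f x

theorem Equiv.Perm.inv_apply_self (f : Equiv.Perm α) (x : α) : f⁻¹ (f x) = x :=
  Equiv.symm_apply_apply f x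

/-- Two cycles whose supports intersect in exactly one point multiply to a cycle
whose support is the union of the supports. -/
lemma key_mul_isCycle {f g : Equiv.Perm α} {x : α} (hf : f.IsCycle) (hg : g.IsCycle)
    (h : f.support ∩ g.support = {x}) :
    (f * g).IsCycle ∧ (f * g).support = f.support ∪ g.support := by
  have hxf : x ∈ f.support := by
    have : x ∈ f.support ∩ g.support := h ▸ Finset.mem_singleton_self x
    exact (Finset.mem_inter.1 this).1
  have hxg : x ∈ g.support := by
    have : x ∈ f.support ∩ g.support := h ▸ Finset.mem_singleton_self x
    exact (Finset.mem_inter.1 this).2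
  have huniq : ∀ y, y ∈ f.support → y ∈ g.support → y = x := by
    intro y hy hy'
    have : y ∈ f.support ∩ g.support := Finset.mem_inter.2 ⟨hy, hy'⟩
    rw [h] at this
    exact Finset.mem_singleton.1 this
  have hfix_g : ∀ y ∈ g.support, y ≠ x → f y = y := by
    intro y hy hyx
    by_contra hc
    exact hyx (huniq y (mem_support.2 hc) hy)
  have hfix_f : ∀ y ∈ f.support, y ≠ x → g y = y := by
    intro y hy hyx
    by_contra hc
    exact hyx (huniq y hy (mem_support.2 hc))
  -- Claim A: the (f*g)-orbit of x covers the g-orbit of x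
  have A : ∀ n : ℕ, ∃ m : ℕ, ((f * g) ^ m) x = (g ^ n) x := by
    intro n
    induction n with
    | zero => exact ⟨0, rfl⟩
    | succ n ih =>
      obtain ⟨m, hm⟩ := ih
      by_cases hy : (g ^ (n + 1)) x = x
      · exact ⟨0, by simp [hy]⟩
      · refine ⟨m + 1, ?_⟩
        have h1 : (g ^ (n + 1)) x ∈ g.support := pow_apply_mem_support.2 hxg
        have h2 : f ((g ^ (n + 1)) x) = (g ^ (n + 1)) x := hfix_g _ h1 hy
        rw [pow_succ' (f * g), mul_apply, hm, mul_apply, ← mul_apply g, ← pow_succ'] at *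
        rw [h2]
  -- Claim B: f x is in the (f*g)-orbit of x
  have B : ∃ m : ℕ, ((f * g) ^ m) x = f x := by
    have hginv : g (g⁻¹ x) ≠ g⁻¹ x := by
      rw [apply_inv_self]
      intro hc
      exact (mem_support.1 hxg) (by rw [hc, apply_inv_self]; exact hc)
    obtain ⟨n, hn⟩ := hg.exists_pow_eq (mem_support.1 hxg) hginv
    obtain ⟨m, hm⟩ := A n
    refine ⟨m + 1, ?_⟩
    rw [pow_succ' (f * g), mul_apply, hm, hn, mul_apply, apply_inv_self]
  -- Claim C: the (f*g)-orbit of x covers the f-orbit of x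
  have C : ∀ n : ℕ, ∃ m : ℕ, ((f * g) ^ m) x = (f ^ (n + 1)) x := by
    intro n
    induction n with
    | zero => simpa using B
    | succ n ih =>
      obtain ⟨m, hm⟩ := ih
      by_cases hy : (f ^ (n + 1)) x = x
      · obtain ⟨m', hm'⟩ := B
        refine ⟨m', ?_⟩
        rw [hm', pow_succ' f (n + 1), mul_apply, pow_succ' f n, mul_apply] at *
        rw [hy]
      · refine ⟨m + 1, ?_⟩
        have h1 : (f ^ (n + 1)) x ∈ f.support := pow_apply_mem_support.2 hxf
        have h2 : g ((f ^ (n + 1)) x) = (f ^ (n + 1)) x := hfix_f _ h1 hy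
        rw [pow_succ' (f * g), mul_apply, hm, mul_apply, h2, ← mul_apply f, ← pow_succ']
  have hmove_g : ∀ y ∈ g.support, (f * g) y ≠ y := by
    intro y hy
    by_cases hz : g y = x
    · rw [mul_apply, hz]
      intro hc
      have hyx : y ∈ f.support := hc ▸ apply_mem_support.2 hxf
      have hyxx : y = x := huniq y hyx hy
      subst hyxx
      exact (mem_support.1 hxg) hz
    · have hgy : g y ∈ g.support := apply_mem_support.2 hy
      rw [mul_apply, hfix_g _ hgy hz]
      exact fun hc => (mem_support.1 hy) hc
  constructor
  · refine ⟨x, hmove_g x hxg, fun y hy => ?_⟩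
    have hy' : y ∈ (f * g).support := mem_support.2 hy
    have hyu : y ∈ f.support ∪ g.support := support_mul_le f g hy'
    rcases Finset.mem_union.1 hyu with hyf | hyg
    · obtain ⟨n, hn⟩ := hf.exists_pow_eq (mem_support.1 hxf) (mem_support.1 hyf)
      cases n with
      | zero => exact ⟨0, by simpa using hn⟩
      | succ n =>
        obtain ⟨m, hm⟩ := C n
        exact ⟨(m : ℤ), by rw [zpow_natCast]; exact hm.trans hn⟩
    · obtain ⟨n, hn⟩ := hg.exists_pow_eq (mem_support.1 hxg) (mem_support.1 hyg)
      obtain ⟨m, hm⟩ := A n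
      exact ⟨(m : ℤ), by rw [zpow_natCast]; exact hm.trans hn⟩
  · apply Finset.Subset.antisymm (support_mul_le f g)
    intro y hy
    rcases Finset.mem_union.1 hy with hyf | hyg
    · by_cases hyg : y ∈ g.support
      · exact mem_support.2 (hmove_g y hyg)
      · have hgy : g y = y := notMem_support.1 hyg
        rw [mem_support, mul_apply, hgy]
        exact mem_support.1 hyf
    · exact mem_support.2 (hmove_g y hyg)

lemma cycleOf_disjoint (σ : Equiv.Perm α) (a : α) :
    Equiv.Perm.Disjoint (σ.cycleOf a) ((σ.cycleOf a)⁻¹ * σ) := by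
  intro y
  by_cases h1 : σ.SameCycle a y
  · by_cases h2 : σ y = y
    · left
      rw [cycleOf_apply, if_pos h1, h2]
    · right
      have hc : σ.cycleOf a y = σ y := by rw [cycleOf_apply, if_pos h1]
      rw [mul_apply, ← hc, inv_apply_self]
  · left
    rw [cycleOf_apply, if_neg h1]

lemma aux_decomp : ∀ (n : ℕ) (σ : Equiv.Perm α), σ.support.card ≤ n →
    σ = 1 ∨ ∃ τ₁ τ₂ : Equiv.Perm α, τ₁.IsCycle ∧ τ₁.support = σ.support ∧
      (τ₂.IsCycle ∨ τ₂ = 1) ∧ τ₂.support ⊆ σ.support ∧ σ = τ₁ * τ₂ := by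
  intro n
  induction n with
  | zero =>
    intro σ hσ
    left
    rw [← support_eq_empty_iff, ← Finset.card_eq_zero]
    omega
  | succ n ih =>
    intro σ hσ
    by_cases h1 : σ = 1
    · exact Or.inl h1
    right
    obtain ⟨a, ha⟩ : σ.support.Nonempty := by
      rw [Finset.nonempty_iff_ne_empty, ne_eq, support_eq_empty_iff]
      exact h1
    have haσ : σ a ≠ a := mem_support.1 ha
    set c := σ.cycleOf a with hc_def
    have hc : c.IsCycle := isCycle_cycleOf σ haσ
    set rest := c⁻¹ * σ with hrest_def
    have hσeq : σ = c * rest := by rw [hrest_def]; group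
    have hdisj : Equiv.Perm.Disjoint c rest := cycleOf_disjoint σ a
    have hsupp : σ.support = c.support ∪ rest.support := by
      conv_lhs => rw [hσeq]
      exact hdisj.support_mul
    have ha_c : a ∈ c.support := by
      rw [mem_support, hc_def, cycleOf_apply_self]
      exact haσ
    have hdisj_supp : _root_.Disjoint c.support rest.support := disjoint_iff_disjoint_support.1 hdisj
    have ha_not_rest : a ∉ rest.support := Finset.disjoint_left.1 hdisj_supp ha_c
    have hrest_sub : rest.support ⊆ σ.support := hsupp ▸ Finset.subset_union_right
    have hcard : rest.support.card ≤ n := by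
      have hsub : rest.support ⊆ σ.support.erase a := by
        intro y hy
        exact Finset.mem_erase.2 ⟨fun h => ha_not_rest (h ▸ hy), hrest_sub hy⟩
      have := Finset.card_le_card hsub
      rw [Finset.card_erase_of_mem ha] at this
      omega
    rcases ih rest hcard with hrest1 | ⟨τ₁, τ₂, ht1c, ht1s, ht2, ht2s, hre⟩
    · refine ⟨c, 1, hc, ?_, Or.inr rfl, by simp, by rw [hσeq, hrest1, mul_one]⟩
      rw [hσeq, hrest1, mul_one]
    · -- choose x
      have hx : ∃ x, x ∈ τ₁.support ∧ (τ₂.IsCycle → x ∈ τ₂.support) := by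
        rcases ht2 with ht2c | ht2one
        · obtain ⟨x, hx1, _⟩ := ht2c
          have hx2 : x ∈ τ₂.support := mem_support.2 hx1
          exact ⟨x, ht1s ▸ ht2s hx2, fun _ => hx2⟩
        · obtain ⟨x, hx1, _⟩ := ht1c
          exact ⟨x, mem_support.2 hx1, fun hcy => absurd ht2one hcy.ne_one⟩
      obtain ⟨x, hxτ₁, hxτ₂⟩ := hx
      have hx_rest : x ∈ rest.support := ht1s ▸ hxτ₁
      have hax : a ≠ x := fun h => ha_not_rest (h ▸ hx_rest)
      set w := Equiv.swap a x with hw_def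
      have hw_supp : w.support = {a, x} := support_swap hax
      have hw_cyc : w.IsCycle := isCycle_swap hax
      have ha_not_τ₁ : a ∉ τ₁.support := fun h => ha_not_rest (ht1s ▸ h)
      have hx_not_c : x ∉ c.support := Finset.disjoint_right.1 hdisj_supp hx_rest
      -- step 1 : τ₁ * w is a cycle
      have hstep1 : (τ₁ * w).IsCycle ∧ (τ₁ * w).support = τ₁.support ∪ {a, x} := by
        have hint : τ₁.support ∩ w.support = {x} := by
          rw [hw_supp]
          ext y
          simp only [Finset.mem_inter, Finset.mem_insert, Finset.mem_singleton]
          constructor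
          · rintro ⟨hy1, hy2 | hy2⟩
            · exact absurd (hy2 ▸ hy1) ha_not_τ₁
            · exact hy2
          · rintro rfl
            exact ⟨hxτ₁, Or.inr rfl⟩
        have := key_mul_isCycle ht1c hw_cyc hint
        rwa [hw_supp] at this
      -- step 2 : c * (τ₁ * w) is a cycle with support σ.support
      have hτ₁c_disj : _root_.Disjoint c.support τ₁.support := by
        rw [ht1s]; exact hdisj_supp
      have hstep2 : (c * (τ₁ * w)).IsCycle ∧
          (c * (τ₁ * w)).support = c.support ∪ (τ₁.support ∪ {a, x}) := by
        have hint : c.support ∩ (τ₁ * w).support = {a} := by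
          rw [hstep1.2]
          ext y
          simp only [Finset.mem_inter, Finset.mem_union, Finset.mem_insert,
            Finset.mem_singleton]
          constructor
          · rintro ⟨hy1, hy2 | hy2 | hy2⟩
            · exact absurd hy1 (Finset.disjoint_left.1 hτ₁c_disj · hy2)
            · exact hy2
            · exact absurd (hy2 ▸ hy1) hx_not_c
          · rintro rfl
            exact ⟨ha_c, Or.inr (Or.inl rfl)⟩
        have := key_mul_isCycle hc hstep1.1 hint
        rwa [hstep1.2] at this
      have hT1_supp : (c * (τ₁ * w)).support = σ.support := by
        rw [hstep2.2, hsupp, ht1s, ← Finset.union_assoc]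
        apply Finset.union_eq_left.2
        intro y hy
        rcases Finset.mem_insert.1 hy with rfl | hy
        · exact Finset.mem_union_left _ ha_c
        · rw [Finset.mem_singleton.1 hy]
          exact Finset.mem_union_right _ hx_rest
      -- T2 : w * τ₂ is a cycle with small support
      have hT2 : (w * τ₂).IsCycle ∧ (w * τ₂).support ⊆ σ.support := by
        have hax_σ : ({a, x} : Finset α) ⊆ σ.support := by
          intro y hy
          rcases Finset.mem_insert.1 hy with rfl | hy
          · exact hsupp ▸ Finset.mem_union_left _ ha_c
          · rw [Finset.mem_singleton.1 hy]
            exact hrest_sub hx_rest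
        rcases ht2 with ht2c | ht2one
        · have hxτ₂' := hxτ₂ ht2c
          have ha_not_τ₂ : a ∉ τ₂.support := fun h => ha_not_rest (ht2s h)
          have hint : w.support ∩ τ₂.support = {x} := by
            rw [hw_supp]
            ext y
            simp only [Finset.mem_inter, Finset.mem_insert, Finset.mem_singleton]
            constructor
            · rintro ⟨hy1 | hy1, hy2⟩
              · exact absurd (hy1 ▸ hy2) ha_not_τ₂
              · exact hy1
            · rintro rfl
              exact ⟨Or.inr rfl, hxτ₂'⟩
          obtain ⟨hcy, hsu⟩ := key_mul_isCycle hw_cyc ht2c hint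
          refine ⟨hcy, ?_⟩
          rw [hsu, hw_supp]
          exact Finset.union_subset hax_σ (ht2s.trans hrest_sub)
        · rw [ht2one, mul_one]
          exact ⟨hw_cyc, hw_supp ▸ hax_σ⟩
      refine ⟨c * (τ₁ * w), w * τ₂, hstep2.1, hT1_supp, Or.inl hT2.1, hT2.2, ?_⟩
      rw [hσeq, hre, hw_def]
      simp [mul_assoc, Equiv.swap_mul_self_mul]

end Aux

/-- Every permutation of a finite set is the composition of two cyclic permutations,
where a cyclic permutation is one whose non-fixed points form a single cycle, or
the identity. -/
theorem stmt_0 {α : Type*} [Finite α] (σ : Equiv.Perm α) :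
    ∃ τ₁ τ₂ : Equiv.Perm α,
      (τ₁.IsCycle ∨ τ₁ = 1) ∧ (τ₂.IsCycle ∨ τ₂ = 1) ∧ σ = τ₁ * τ₂ := by
  classical
  letI := Fintype.ofFinite α
  rcases aux_decomp σ.support.card σ le_rfl with h1 | ⟨τ₁, τ₂, ht1c, _, ht2, _, heq⟩
  · exact ⟨1, 1, Or.inr rfl, Or.inr rfl, by rw [h1, mul_one]⟩
  · exact ⟨τ₁, τ₂, Or.inl ht1c, ht2, heq⟩
end

section
/- Every finite directed multigraph admits a path-cycle decomposition: its edges can be partitioned into a collection of directed paths together with edge sets of directed cycles, where the number of paths equals half the sum over vertices of |outdegree − indegree|. -/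
/-- The edge set `B` forms a single directed cycle with `m + 1` distinct vertices. -/
def IsDirCycle {V E : Type*} [DecidableEq E] (s t : E → V) (B : Finset E) : Prop :=
  ∃ (m : ℕ) (v : Fin (m + 1) ↪ V) (g : Fin (m + 1) → E),
    Function.Injective g ∧ Finset.univ.image g = B ∧
    ∀ i, s (g i) = v i ∧ t (g i) = v (i + 1)

/-- The edge set `B` forms a single directed path with `m + 2` distinct vertices
`v 0, ..., v (m+1)` and one edge from `v i` to `v (i+1)` for each `i ≤ m`. -/
def IsDirPath {V E : Type*} [DecidableEq E] (s t : E → V) (B : Finset E) : Prop :=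
  ∃ (m : ℕ) (v : Fin (m + 2) ↪ V) (g : Fin (m + 1) → E),
    Function.Injective g ∧ Finset.univ.image g = B ∧
    ∀ i : Fin (m + 1), s (g i) = v i.castSucc ∧ t (g i) = v i.succ

set_option linter.unusedSectionVars false

open Finset List

section Aux

variable {V E : Type*} [DecidableEq V] [DecidableEq E] (s t : E → V)

/-- vertex list of a walk: source of first edge, then targets of all edges -/
def vlist : List E → List V
  | [] => []
  | e :: es => s e :: (e :: es).map t

lemma vlist_eq (es : List E) (h : es ≠ []) :
    vlist s t es = s (es.head h) :: es.map t := by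
  cases es with
  | nil => exact absurd rfl h
  | cons e l => rfl

lemma length_vlist (es : List E) (h : es ≠ []) :
    (vlist s t es).length = es.length + 1 := by
  rw [vlist_eq s t es h]; simp

lemma vlist_getElem_succ (es : List E) (h : es ≠ []) (i : ℕ) (hi : i < es.length)
    (hi' : i + 1 < (vlist s t es).length) : (vlist s t es)[i+1] = t (es[i]'hi) := by
  simp [vlist_eq s t es h]

lemma vlist_getElem_zero (es : List E) (h : es ≠ []) (hi : 0 < es.length)
    (hi' : 0 < (vlist s t es).length) : (vlist s t es)[0] = s (es[0]'hi) := by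
  simp only [vlist_eq s t es h, List.getElem_cons_zero]
  rw [List.head_eq_getElem]

lemma vlist_getElem_eq_s (es : List E) (h : es ≠ [])
    (hch : es.Chain' fun a b => t a = s b) (i : ℕ) (hi : i < es.length)
    (hi' : i < (vlist s t es).length) : (vlist s t es)[i] = s (es[i]'hi) := by
  cases i with
  | zero => exact vlist_getElem_zero s t es h hi hi'
  | succ j =>
    rw [vlist_getElem_succ s t es h j (by omega) hi']
    exact List.isChain_iff_getElem.mp hch j (by omega)


lemma nodup_of_vlist (es : List E) (hnd : (vlist s t es).Nodup) : es.Nodup := by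
  cases es with
  | nil => exact List.nodup_nil
  | cons e l =>
    have : ((e :: l).map t).Nodup := (List.nodup_cons.mp hnd).2
    exact this.of_map t

lemma image_get_univ {α : Type*} [DecidableEq α] (l : List α) (k : ℕ) (h : k = l.length) :
    Finset.univ.image (fun i : Fin k => l.get (Fin.cast h i)) = l.toFinset := by
  subst h
  ext a
  simp [List.mem_iff_get]

lemma path_of_walk (es : List E) (hne : es ≠ [])
    (hch : es.Chain' fun a b => t a = s b) (hnd : (vlist s t es).Nodup) :
    ∃ (m : ℕ) (v : Fin (m + 2) ↪ V) (g : Fin (m + 1) → E),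
      Function.Injective g ∧ Finset.univ.image g = es.toFinset ∧
      (∀ i : Fin (m + 1), s (g i) = v i.castSucc ∧ t (g i) = v i.succ) ∧
      v 0 = s (es.head hne) ∧ v (Fin.last (m + 1)) = t (es.getLast hne) := by
  obtain ⟨n, hn⟩ : ∃ n, es.length = n + 1 :=
    ⟨es.length - 1, (Nat.succ_pred_eq_of_pos (List.length_pos_iff.mpr hne)).symm⟩
  have hvl : n + 2 = (vlist s t es).length := by
    rw [length_vlist s t es hne, hn]
  have hES : n + 1 = es.length := hn.symm
  have hvinj : Function.Injective fun i : Fin (n + 2) => (vlist s t es).get (Fin.cast hvl i) := by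
    intro i j hij
    have := List.nodup_iff_injective_get.mp hnd hij
    simpa [Fin.ext_iff] using this
  refine ⟨n, ⟨fun i => (vlist s t es).get (Fin.cast hvl i), hvinj⟩,
    fun i => es.get (Fin.cast hES i), ?_, ?_, ?_, ?_, ?_⟩
  · intro i j hij
    have := List.nodup_iff_injective_get.mp (nodup_of_vlist s t es hnd) hij
    simpa [Fin.ext_iff] using this
  · exact image_get_univ es (n + 1) hES
  · intro i
    constructor
    · show s (es.get _) = (vlist s t es).get _
      rw [List.get_eq_getElem, List.get_eq_getElem]
      simp only [Fin.coe_cast, Fin.coe_castSucc]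
      exact (vlist_getElem_eq_s s t es hne hch i.1 (by omega) (by omega)).symm
    · show t (es.get _) = (vlist s t es).get _
      rw [List.get_eq_getElem, List.get_eq_getElem]
      simp only [Fin.coe_cast, Fin.val_succ]
      exact (vlist_getElem_succ s t es hne i.1 (by omega) (by omega)).symm
  · show (vlist s t es).get _ = _
    rw [List.get_eq_getElem]
    simp only [Fin.coe_cast, Fin.val_zero]
    rw [vlist_getElem_zero s t es hne (by omega) (by omega)]
    rw [List.head_eq_getElem]
  · show (vlist s t es).get _ = _
    rw [List.get_eq_getElem]
    simp only [Fin.coe_cast, Fin.val_last]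
    rw [vlist_getElem_succ s t es hne n (by omega) (by omega),
      List.getLast_eq_getElem]
    simp only [show es.length - 1 = n by omega]

lemma cycle_of_list (cs : List E) (hne : cs ≠ [])
    (hch : cs.Chain' fun a b => t a = s b) (hnd : (cs.map t).Nodup)
    (hcl : t (cs.getLast hne) = s (cs.head hne)) :
    IsDirCycle s t cs.toFinset := by
  obtain ⟨n, hn⟩ : ∃ n, cs.length = n + 1 :=
    ⟨cs.length - 1, (Nat.succ_pred_eq_of_pos (List.length_pos_iff.mpr hne)).symm⟩
  have hCS : n + 1 = cs.length := hn.symm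
  have hcsnd : cs.Nodup := hnd.of_map t
  have hget : Function.Injective fun i : Fin (n+1) => cs.get (Fin.cast hCS i) := by
    intro i j hij
    have := List.nodup_iff_injective_get.mp hcsnd hij
    simpa [Fin.ext_iff] using this
  have hvinj : Function.Injective fun i : Fin (n + 1) => t (cs.get (Fin.cast hCS i)) := by
    intro i j hij
    have h2 : (cs.map t).get (Fin.cast (by simp [hn]) i) = (cs.map t).get (Fin.cast (by simp [hn]) j) := by
      rw [List.get_eq_getElem, List.get_eq_getElem]
      simpa [List.getElem_map] using hij
    have := List.nodup_iff_injective_get.mp hnd h2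
    simpa [Fin.ext_iff] using this
  refine ⟨n, ⟨fun i => t (cs.get (Fin.cast hCS i)), hvinj⟩,
    fun i => cs.get (Fin.cast hCS (i + 1)), ?_, ?_, ?_⟩
  · intro i j hij
    have := hget hij
    exact add_right_cancel this
  · rw [show (fun i : Fin (n+1) => cs.get (Fin.cast hCS (i + 1)))
        = (fun i : Fin (n+1) => cs.get (Fin.cast hCS i)) ∘ (fun i => i + 1) from rfl,
      ← Finset.image_image]
    rw [show Finset.univ.image (fun i : Fin (n+1) => i + 1) = Finset.univ from
      Finset.image_univ_equiv (Equiv.addRight 1)]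
    exact image_get_univ cs (n + 1) hCS
  · intro i
    constructor
    · show s (cs.get _) = t (cs.get _)
      rw [List.get_eq_getElem, List.get_eq_getElem]
      simp only [Fin.coe_cast]
      rcases eq_or_ne i (Fin.last n) with h | h
      · subst h
        have h1 : ((Fin.last n + 1 : Fin (n+1)) : ℕ) = 0 := by
          simp [Fin.val_add_one]
        have h2 : ((Fin.last n : Fin (n+1)) : ℕ) = n := rfl
        simp only [h1, h2]
        rw [show (cs[0]'(by omega)) = cs.head hne from (List.head_eq_getElem (l := cs) hne).symm]
        rw [show (cs[n]'(by omega)) = cs.getLast hne from by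
          rw [List.getLast_eq_getElem]; congr 1; omega]
        exact hcl.symm
      · have h1 : ((i + 1 : Fin (n+1)) : ℕ) = i.1 + 1 := by
          rw [Fin.val_add_one]; simp [h]
        simp only [h1]
        exact (List.isChain_iff_getElem.mp hch i.1 (by
          have := i.isLt
          have : i.1 ≠ n := fun hc => h (Fin.ext hc)
          omega)).symm
    · show t (cs.get _) = t (cs.get _)
      rfl

lemma vlist_getElem_len (es : List E) (hne : es ≠ [])
    (h' : es.length < (vlist s t es).length) :
    (vlist s t es)[es.length] = t (es.getLast hne) := by
  cases es with
  | nil => exact absurd rfl hne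
  | cons f l =>
    simp only [vlist, List.length_cons, List.getElem_cons_succ, List.getElem_map,
      List.getLast_eq_getElem, Nat.add_sub_cancel]

lemma vlist_getElem_head (es : List E) (hne : es ≠ [])
    (h' : 0 < (vlist s t es).length) :
    (vlist s t es)[0] = s (es.head hne) := by
  cases es with
  | nil => exact absurd rfl hne
  | cons f l => simp [vlist]

lemma vlist_append_singleton (es : List E) (hne : es ≠ []) (e : E) :
    vlist s t (es ++ [e]) = vlist s t es ++ [t e] := by
  cases es with
  | nil => exact absurd rfl hne
  | cons f l => simp [vlist]

lemma vlist_cons_eq (e : E) (es : List E) (hne : es ≠ [])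
    (h : t e = s (es.head hne)) :
    vlist s t (e :: es) = s e :: vlist s t es := by
  rw [vlist_eq s t (e :: es) (List.cons_ne_nil e es), vlist_eq s t es hne]
  simp [h]

/-- `A` contains (the edge list of) a directed cycle. -/
def HasCycleIn (A : Finset E) : Prop :=
  ∃ (cs : List E) (hne : cs ≠ []), cs.Chain' (fun a b => t a = s b) ∧
    (∀ e ∈ cs, e ∈ A) ∧ (cs.map t).Nodup ∧ t (cs.getLast hne) = s (cs.head hne)

lemma exists_boundary_walk [Fintype E] (A : Finset E) (hA : A.Nonempty)
    (hloop : ∀ e, s e ≠ t e) (hnc : ¬ HasCycleIn s t A) :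
    ∃ (es : List E) (hne : es ≠ []), es.Chain' (fun a b => t a = s b) ∧
      (∀ e ∈ es, e ∈ A) ∧ (vlist s t es).Nodup ∧
      (∀ e ∈ A, s e ≠ t (es.getLast hne)) ∧ (∀ e ∈ A, t e ≠ s (es.head hne)) := by
  classical
  set W : List E → Prop := fun es => es ≠ [] ∧ es.Chain' (fun a b => t a = s b) ∧
    (∀ e ∈ es, e ∈ A) ∧ (vlist s t es).Nodup with hW
  have hbound : ∀ es, W es → es.length ≤ Fintype.card E := fun es h =>
    (nodup_of_vlist s t es h.2.2.2).length_le_card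
  obtain ⟨e0, he0⟩ := hA
  have hW0 : W [e0] := by
    refine ⟨by simp, List.isChain_singleton e0, by simpa using he0, ?_⟩
    simp [vlist, hloop e0]
  set P : ℕ → Prop := fun k => ∃ es, W es ∧ es.length = k with hP
  have hP1 : P 1 := ⟨[e0], hW0, rfl⟩
  have hcard1 : 1 ≤ Fintype.card E := hbound [e0] hW0
  set n := Nat.findGreatest P (Fintype.card E) with hn
  have hPn : P n := Nat.findGreatest_spec hcard1 hP1
  have hmax : ∀ es', W es' → es'.length ≤ n := fun es' h =>
    Nat.le_findGreatest (hbound es' h) ⟨es', h, rfl⟩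
  obtain ⟨es, hWes, hlen⟩ := hPn
  obtain ⟨hne, hch, hmem, hnd⟩ := hWes
  have hL : 0 < es.length := List.length_pos_iff.mpr hne
  have hvlen : (vlist s t es).length = es.length + 1 := length_vlist s t es hne
  refine ⟨es, hne, hch, hmem, hnd, ?_, ?_⟩
  · -- no edge of A leaves the last vertex
    intro e he hse
    by_cases hmemv : t e ∈ vlist s t es
    · obtain ⟨j, hj, hjeq⟩ := List.mem_iff_getElem.mp hmemv
      have hjlen : j < es.length + 1 := by rwa [hvlen] at hj
      rcases eq_or_lt_of_le (Nat.lt_succ_iff.mp hjlen) with hjL | hjL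
      · -- t e is the last vertex : loop
        subst hjL
        apply hloop e
        rw [hse, ← hjeq]
        exact (vlist_getElem_len s t es hne (by omega)).symm
      · -- t e is an interior vertex : cycle
        apply hnc
        have hdropne : es.drop j ≠ [] := by
          apply List.ne_nil_of_length_pos
          rw [List.length_drop]; omega
        refine ⟨es.drop j ++ [e], by simp, ?_, ?_, ?_, ?_⟩
        · dsimp only [List.Chain']; rw [List.isChain_append]
          refine ⟨hch.drop j, List.isChain_singleton e, ?_⟩
          intro x hx y hy
          rw [List.getLast?_eq_getLast hdropne] at hx
          simp only [List.head?_cons, Option.mem_def, Option.some.injEq] at hx hy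
          subst hx; subst hy
          rw [List.getLast_drop]
          exact hse.symm
        · intro f hf
          rcases List.mem_append.mp hf with h | h
          · exact hmem f (List.mem_of_mem_drop h)
          · simp only [List.mem_singleton] at h; subst h; exact he
        · rw [List.map_append, List.map_drop]
          have hndc : (s (es.head hne) :: es.map t).Nodup := by
            rw [← vlist_eq s t es hne]; exact hnd
          have h1 : ((es.map t).drop j).Nodup :=
            List.Sublist.nodup (List.drop_suffix j (es.map t)).sublist
              (List.nodup_cons.mp hndc).2
          have h2 : t e ∉ (es.map t).drop j := by
            intro hc
            obtain ⟨k, hk, hkeq⟩ := List.mem_iff_getElem.mp hc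
            rw [List.getElem_drop] at hkeq
            have hklen : j + k < es.length := by
              rw [List.length_drop, List.length_map] at hk; omega
            rw [List.getElem_map] at hkeq
            have h3 : (vlist s t es)[j + k + 1]'(by omega) = t e := by
              rw [vlist_getElem_succ s t es hne (j + k) hklen (by omega)]
              exact hkeq
            have h4 := List.nodup_iff_injective_get.mp hnd
              (show (vlist s t es).get ⟨j + k + 1, by omega⟩ =
                (vlist s t es).get ⟨j, by omega⟩ from by
                simp only [List.get_eq_getElem]; rw [h3, hjeq])
            simp only [Fin.mk.injEq] at h4
            omega
          simp [List.nodup_append, h1, h2]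
          intro a ha hc; exact h2 (hc ▸ ha)
        · rw [List.getLast_append_singleton, List.head_append_left hdropne,
            List.head_drop, ← hjeq]
          exact vlist_getElem_eq_s s t es hne hch j hjL (by omega)
    · -- t e is a new vertex : extend, contradicting maximality
      have hW' : W (es ++ [e]) := by
        refine ⟨by simp, ?_, ?_, ?_⟩
        · dsimp only [List.Chain']; rw [List.isChain_append]
          refine ⟨hch, List.isChain_singleton e, ?_⟩
          intro x hx y hy
          rw [List.getLast?_eq_getLast hne] at hx
          simp only [List.head?_cons, Option.mem_def, Option.some.injEq] at hx hy
          subst hx; subst hy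
          exact hse.symm
        · intro f hf
          rcases List.mem_append.mp hf with h | h
          · exact hmem f h
          · simp only [List.mem_singleton] at h; subst h; exact he
        · rw [vlist_append_singleton s t es hne e]
          simp [List.nodup_append, hnd, hmemv]
          intro a ha hc; exact hmemv (hc ▸ ha)
      have := hmax _ hW'
      rw [List.length_append, hlen] at this
      simp at this
  · -- no edge of A enters the first vertex
    intro e he hte
    by_cases hmemv : s e ∈ vlist s t es
    · obtain ⟨j, hj, hjeq⟩ := List.mem_iff_getElem.mp hmemv
      have hjlen : j < es.length + 1 := by rwa [hvlen] at hj
      rcases Nat.eq_zero_or_pos j with hj0 | hj0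
      · -- s e is the first vertex : loop
        apply hloop e
        rw [← hjeq, hte]
        subst hj0
        exact vlist_getElem_head s t es hne (by omega)
      rcases eq_or_lt_of_le (Nat.lt_succ_iff.mp hjlen) with hjL | hjL
      · -- s e is the last vertex : whole walk + e is a cycle
        subst hjL
        apply hnc
        refine ⟨es ++ [e], by simp, ?_, ?_, ?_, ?_⟩
        · dsimp only [List.Chain']; rw [List.isChain_append]
          refine ⟨hch, List.isChain_singleton e, ?_⟩
          intro x hx y hy
          rw [List.getLast?_eq_getLast hne] at hx
          simp only [List.head?_cons, Option.mem_def, Option.some.injEq] at hx hy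
          subst hx; subst hy
          rw [← hjeq]
          exact (vlist_getElem_len s t es hne (by omega)).symm
        · intro f hf
          rcases List.mem_append.mp hf with h | h
          · exact hmem f h
          · simp only [List.mem_singleton] at h; subst h; exact he
        · rw [List.map_append]
          have hndc : (s (es.head hne) :: es.map t).Nodup := by
            rw [← vlist_eq s t es hne]; exact hnd
          have h1 : (es.map t).Nodup := (List.nodup_cons.mp hndc).2
          have h2 : t e ∉ es.map t := by
            rw [hte]; exact (List.nodup_cons.mp hndc).1
          simp [List.nodup_append, h1, h2]
          intro a ha hc; exact h2 (hc ▸ List.mem_map_of_mem ha)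
        · rw [List.getLast_append_singleton, List.head_append_left hne]
          exact hte
      · -- s e is an interior vertex : cycle e :: es.take j
        apply hnc
        have htakene : es.take j ≠ [] := by
          apply List.ne_nil_of_length_pos
          rw [List.length_take]
          omega
        have hndc : (s (es.head hne) :: es.map t).Nodup := by
          rw [← vlist_eq s t es hne]; exact hnd
        refine ⟨e :: es.take j, by simp, ?_, ?_, ?_, ?_⟩
        · dsimp only [List.Chain']; rw [List.isChain_cons]
          refine ⟨?_, hch.take j⟩
          intro y hy
          rw [List.head?_eq_head htakene] at hy
          simp only [Option.mem_def, Option.some.injEq] at hy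
          subst hy
          rw [List.head_take]
          exact hte
        · intro f hf
          rcases List.mem_cons.mp hf with h | h
          · subst h; exact he
          · exact hmem f (List.mem_of_mem_take h)
        · rw [List.map_cons, List.map_take, List.nodup_cons]
          constructor
          · intro hc
            obtain ⟨k, hk, hkeq⟩ := List.mem_iff_getElem.mp hc
            rw [List.getElem_take] at hkeq
            have hklen : k < es.length := by
              rw [List.length_take, List.length_map] at hk; omega
            rw [List.getElem_map] at hkeq
            have h3 : (vlist s t es)[k + 1]'(by omega) = (vlist s t es)[0]'(by omega) := by
              rw [vlist_getElem_succ s t es hne k hklen (by omega), hkeq, hte,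
                vlist_getElem_head s t es hne (by omega)]
            have h4 := List.nodup_iff_injective_get.mp hnd
              (show (vlist s t es).get ⟨k + 1, by omega⟩ =
                (vlist s t es).get ⟨0, by omega⟩ from by
                simp only [List.get_eq_getElem]; exact h3)
            simp only [Fin.mk.injEq] at h4
            omega
          · exact List.Sublist.nodup (List.take_prefix j (es.map t)).sublist
              (List.nodup_cons.mp hndc).2
        · rw [List.getLast_cons htakene, List.head_cons, List.getLast_take,
            List.getElem?_eq_getElem (show j - 1 < es.length by omega)]
          simp only [Option.getD_some]
          have h5 : (vlist s t es)[j]'(by omega) = t (es[j - 1]'(by omega)) := by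
            have h6 := vlist_getElem_succ s t es hne (j - 1) (by omega) (by omega)
            simp only [show j - 1 + 1 = j by omega] at h6
            exact h6
          rw [← hjeq]
          exact h5.symm
    · -- s e is a new vertex : extend backwards, contradicting maximality
      have hW' : W (e :: es) := by
        refine ⟨by simp, ?_, ?_, ?_⟩
        · dsimp only [List.Chain']; rw [List.isChain_cons]
          refine ⟨?_, hch⟩
          intro y hy
          rw [List.head?_eq_head hne] at hy
          simp only [Option.mem_def, Option.some.injEq] at hy
          subst hy
          exact hte
        · intro f hf
          rcases List.mem_cons.mp hf with h | h
          · subst h; exact he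
          · exact hmem f h
        · rw [vlist_cons_eq s t e es hne hte]
          simp [hnd, hmemv]
      have := hmax _ hW'
      rw [List.length_cons, hlen] at this
      simp at this

lemma card_filter_eq_of_inj {ι W : Type*} [Fintype ι] [DecidableEq W]
    (f : ι → W) (hf : Function.Injective f) (w : W) :
    (Finset.univ.filter fun i => f i = w).card
      = if w ∈ Finset.univ.image f then 1 else 0 := by
  classical
  split_ifs with h
  · obtain ⟨i, -, hi⟩ := Finset.mem_image.mp h
    rw [Finset.card_eq_one]
    refine ⟨i, Finset.eq_singleton_iff_unique_mem.mpr ⟨?_, ?_⟩⟩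
    · simp [hi]
    · intro j hj
      simp only [Finset.mem_filter] at hj
      exact hf (hj.2.trans hi.symm)
  · rw [Finset.card_eq_zero, Finset.filter_eq_empty_iff]
    intro i _
    exact fun hc => h (Finset.mem_image.mpr ⟨i, Finset.mem_univ i, hc⟩)

lemma block_filter_card {ι : Type*} [Fintype ι] (g : ι → E) (hg : Function.Injective g)
    (p : E → V) (f : ι → V) (hf : Function.Injective f) (hpf : ∀ i, p (g i) = f i) (w : V) :
    ((Finset.univ.image g).filter fun e => p e = w).card
      = if w ∈ Finset.univ.image f then 1 else 0 := by
  rw [Finset.filter_image, Finset.card_image_of_injective _ hg]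
  simp only [hpf]
  exact card_filter_eq_of_inj f hf w

lemma cycle_deg_eq (B : Finset E) (h : IsDirCycle s t B) (w : V) :
    (B.filter fun e => s e = w).card = (B.filter fun e => t e = w).card := by
  obtain ⟨m, v, g, hg, himg, hst⟩ := h
  rw [← himg]
  rw [block_filter_card g hg s (fun i => v i) v.injective (fun i => (hst i).1) w,
    block_filter_card g hg t (fun i => v (i + 1))
      (v.injective.comp fun i j hij => add_right_cancel hij) (fun i => (hst i).2) w]
  congr 1
  rw [show (fun i : Fin (m + 1) => v (i + 1)) = (fun i => v i) ∘ (fun i => i + 1) from rfl,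
    ← Finset.image_image,
    show Finset.univ.image (fun i : Fin (m + 1) => i + 1) = Finset.univ from
      Finset.image_univ_equiv (Equiv.addRight 1)]

lemma filter_card_sdiff (A B : Finset E) (h : B ⊆ A) (p : E → Prop) [DecidablePred p] :
    (A.filter p).card = ((A \ B).filter p).card + (B.filter p).card := by
  rw [← Finset.card_union_of_disjoint
    (Finset.disjoint_filter_filter (Finset.sdiff_disjoint (s := B) (t := A))),
    ← Finset.filter_union, Finset.sdiff_union_of_subset h]

lemma decomp [Fintype V] [Fintype E] (hloop : ∀ e, s e ≠ t e) (A : Finset E) :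
    ∃ PS CS : Finset (Finset E),
      (∀ B ∈ PS, IsDirPath s t B) ∧
      (∀ B ∈ CS, IsDirCycle s t B) ∧
      (PS ∪ CS).biUnion id = A ∧
      (∀ B ∈ PS ∪ CS, ∀ B' ∈ PS ∪ CS, B ≠ B' → Disjoint B B') ∧
      2 * PS.card = ∑ v : V, Nat.dist
        ((A.filter fun e => s e = v).card) ((A.filter fun e => t e = v).card) := by
  induction A using Finset.strongInduction with
  | _ A ih =>
  rcases Finset.eq_empty_or_nonempty A with rfl | hA
  · exact ⟨∅, ∅, by simp, by simp, by simp, by simp, by simp [Nat.dist_self]⟩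
  by_cases hcyc : HasCycleIn s t A
  · -- peel off a cycle
    obtain ⟨cs, hne, hch, hmemA, hnd, hcl⟩ := hcyc
    set B := cs.toFinset with hB
    have hBA : B ⊆ A := fun e hx => hmemA e (List.mem_toFinset.mp hx)
    have hBne : B.Nonempty := by rw [hB, List.toFinset_nonempty_iff]; exact hne
    have hcyc' : IsDirCycle s t B := cycle_of_list s t cs hne hch hnd hcl
    obtain ⟨PS, CS, h1, h2, h3, h4, h5⟩ := ih (A \ B) (Finset.sdiff_ssubset hBA hBne)
    have hsub : ∀ C ∈ PS ∪ CS, C ⊆ A \ B := fun C hC x hx =>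
      h3 ▸ Finset.mem_biUnion.mpr ⟨C, hC, hx⟩
    refine ⟨PS, insert B CS, h1, ?_, ?_, ?_, ?_⟩
    · intro C hC
      rcases Finset.mem_insert.mp hC with rfl | hC
      · exact hcyc'
      · exact h2 C hC
    · rw [show PS ∪ insert B CS = insert B (PS ∪ CS) from by
        ext x; simp [Finset.mem_insert, Finset.mem_union]]
      rw [Finset.biUnion_insert, h3]
      show B ∪ (A \ B) = A
      rw [Finset.union_sdiff_of_subset hBA]
    · have hmem' : ∀ D, D ∈ PS ∪ insert B CS ↔ D = B ∨ D ∈ PS ∪ CS := by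
        intro D; simp [Finset.mem_insert, Finset.mem_union]
      intro C hC C' hC' hne'
      rcases (hmem' C).mp hC with rfl | hC2
      · rcases (hmem' C').mp hC' with rfl | hC2'
        · exact absurd rfl hne'
        · exact (Finset.sdiff_disjoint.symm).mono_right (hsub C' hC2')
      · rcases (hmem' C').mp hC' with rfl | hC2'
        · exact ((Finset.sdiff_disjoint.symm).mono_right (hsub C hC2)).symm
        · exact h4 C hC2 C' hC2' hne'
    · rw [h5]
      apply Finset.sum_congr rfl
      intro w _
      rw [filter_card_sdiff A B hBA (fun e => s e = w),
        filter_card_sdiff A B hBA (fun e => t e = w), cycle_deg_eq s t B hcyc' w,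
        Nat.dist_add_add_right]
  · -- peel off a path
    obtain ⟨es, hne, hch, hmemA, hnd, hlast, hhead⟩ :=
      exists_boundary_walk s t A hA hloop hcyc
    obtain ⟨m, v, g, hg, himg, hst, hv0, hvlast⟩ := path_of_walk s t es hne hch hnd
    set B := es.toFinset with hB
    have hBA : B ⊆ A := fun e hx => hmemA e (List.mem_toFinset.mp hx)
    have hBne : B.Nonempty := by rw [hB, List.toFinset_nonempty_iff]; exact hne
    have hpath : IsDirPath s t B := ⟨m, v, g, hg, himg, hst⟩
    set a := v 0 with ha
    set b := v (Fin.last (m + 1)) with hb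
    have hab : a ≠ b := by
      intro h
      have := v.injective h
      rw [Fin.ext_iff] at this
      simp [Fin.val_last] at this
    have hta : (A.filter fun e => t e = a).card = 0 := by
      rw [Finset.card_eq_zero, Finset.filter_eq_empty_iff]
      intro e heA hc
      exact hhead e heA (hc.trans hv0)
    have hsb : (A.filter fun e => s e = b).card = 0 := by
      rw [Finset.card_eq_zero, Finset.filter_eq_empty_iff]
      intro e heA hc
      exact hlast e heA (hc.trans hvlast)
    obtain ⟨PS, CS, h1, h2, h3, h4, h5⟩ := ih (A \ B) (Finset.sdiff_ssubset hBA hBne)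
    have hsub : ∀ C ∈ PS ∪ CS, C ⊆ A \ B := fun C hC x hx =>
      h3 ▸ Finset.mem_biUnion.mpr ⟨C, hC, hx⟩
    have hBPS : B ∉ PS := by
      intro hc
      obtain ⟨x, hx⟩ := hBne
      exact (Finset.mem_sdiff.mp (hsub B (Finset.mem_union_left CS hc) hx)).2 hx
    -- degree facts for B
    have houtB : ∀ w, (B.filter fun e => s e = w).card =
        if w ∈ Finset.univ.image (fun i : Fin (m + 1) => v i.castSucc) then 1 else 0 := by
      intro w
      rw [← himg]
      exact block_filter_card g hg s (fun i => v i.castSucc)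
        (v.injective.comp (Fin.castSucc_injective (m + 1))) (fun i => (hst i).1) w
    have hinB : ∀ w, (B.filter fun e => t e = w).card =
        if w ∈ Finset.univ.image (fun i : Fin (m + 1) => v i.succ) then 1 else 0 := by
      intro w
      rw [← himg]
      exact block_filter_card g hg t (fun i => v i.succ)
        (v.injective.comp (Fin.succ_injective (m + 1))) (fun i => (hst i).2) w
    have key : ∀ w : V,
        Nat.dist ((A.filter fun e => s e = w).card) ((A.filter fun e => t e = w).card)
          = Nat.dist (((A \ B).filter fun e => s e = w).card)
              (((A \ B).filter fun e => t e = w).card)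
            + (if w = a ∨ w = b then 1 else 0) := by
      intro w
      rw [filter_card_sdiff A B hBA (fun e => s e = w),
        filter_card_sdiff A B hBA (fun e => t e = w), houtB w, hinB w]
      by_cases hwa : w = a
      · have hAt : (A.filter fun e => t e = w).card = 0 := by rw [hwa]; exact hta
        have hA't : ((A \ B).filter fun e => t e = w).card = 0 :=
          Nat.le_zero.mp (hAt ▸ Finset.card_le_card
            (Finset.filter_subset_filter _ Finset.sdiff_subset))
        have hBt : (if w ∈ Finset.univ.image (fun i : Fin (m + 1) => v i.succ)
            then 1 else 0) = 0 := by
          rw [if_neg]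
          intro hc
          obtain ⟨i, -, hi⟩ := Finset.mem_image.mp hc
          have := v.injective (hi.trans (hwa.trans ha))
          exact Fin.succ_ne_zero i this
        have hBs : (if w ∈ Finset.univ.image (fun i : Fin (m + 1) => v i.castSucc)
            then 1 else 0) = 1 := by
          rw [if_pos]
          exact Finset.mem_image.mpr ⟨0, Finset.mem_univ 0, by
            rw [Fin.castSucc_zero, ← ha, hwa]⟩
        rw [hBt, hBs, hA't, if_pos (Or.inl hwa)]
        simp [Nat.dist_zero_right]
      · by_cases hwb : w = b
        · have hAs : (A.filter fun e => s e = w).card = 0 := by rw [hwb]; exact hsb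
          have hA's : ((A \ B).filter fun e => s e = w).card = 0 :=
            Nat.le_zero.mp (hAs ▸ Finset.card_le_card
              (Finset.filter_subset_filter _ Finset.sdiff_subset))
          have hBs : (if w ∈ Finset.univ.image (fun i : Fin (m + 1) => v i.castSucc)
              then 1 else 0) = 0 := by
            rw [if_neg]
            intro hc
            obtain ⟨i, -, hi⟩ := Finset.mem_image.mp hc
            have := v.injective (hi.trans (hwb.trans hb))
            exact absurd this (Fin.ne_of_lt (Fin.castSucc_lt_last i))
          have hBt : (if w ∈ Finset.univ.image (fun i : Fin (m + 1) => v i.succ)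
              then 1 else 0) = 1 := by
            rw [if_pos]
            exact Finset.mem_image.mpr ⟨Fin.last m, Finset.mem_univ _, by
              rw [Fin.succ_last, ← hb, hwb]⟩
          rw [hBs, hBt, hA's, if_pos (Or.inr hwb)]
          simp [Nat.dist_zero_left]
        · have hiff : (w ∈ Finset.univ.image (fun i : Fin (m + 1) => v i.castSucc)) ↔
              (w ∈ Finset.univ.image (fun i : Fin (m + 1) => v i.succ)) := by
            constructor
            · intro hc
              obtain ⟨i, -, hi⟩ := Finset.mem_image.mp hc
              have hne0 : i.castSucc ≠ 0 := by
                intro hc0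
                exact hwa (by rw [← hi, hc0, ← ha])
              refine Finset.mem_image.mpr ⟨(i.castSucc).pred hne0, Finset.mem_univ _, ?_⟩
              rw [Fin.succ_pred]
              exact hi
            · intro hc
              obtain ⟨i, -, hi⟩ := Finset.mem_image.mp hc
              have hnel : i.succ ≠ Fin.last (m + 1) := by
                intro hcl
                exact hwb (by rw [← hi, hcl, ← hb])
              refine Finset.mem_image.mpr ⟨(i.succ).castPred hnel, Finset.mem_univ _, ?_⟩
              rw [Fin.castSucc_castPred]
              exact hi
          rw [if_neg (by tauto : ¬ (w = a ∨ w = b))]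
          by_cases hw : w ∈ Finset.univ.image (fun i : Fin (m + 1) => v i.castSucc)
          · rw [if_pos hw, if_pos (hiff.mp hw), Nat.dist_add_add_right, Nat.add_zero]
          · rw [if_neg hw, if_neg (fun hc => hw (hiff.mpr hc)), Nat.add_zero,
              Nat.add_zero, Nat.add_zero]
    have hsum2 : (∑ w : V, if w = a ∨ w = b then (1 : ℕ) else 0) = 2 := by
      have heq : ∀ w : V, (if w = a ∨ w = b then (1 : ℕ) else 0)
          = if w ∈ ({a, b} : Finset V) then 1 else 0 := by
        intro w
        simp [Finset.mem_insert, Finset.mem_singleton]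
      simp_rw [heq]
      rw [Finset.sum_ite_mem, Finset.univ_inter, Finset.sum_const, smul_eq_mul, mul_one,
        Finset.card_insert_of_notMem (by simpa using hab), Finset.card_singleton]
    refine ⟨insert B PS, CS, ?_, h2, ?_, ?_, ?_⟩
    · intro C hC
      rcases Finset.mem_insert.mp hC with rfl | hC
      · exact hpath
      · exact h1 C hC
    · rw [show insert B PS ∪ CS = insert B (PS ∪ CS) from by
        ext x; simp [Finset.mem_insert, Finset.mem_union]]
      rw [Finset.biUnion_insert, h3]
      show B ∪ (A \ B) = A
      rw [Finset.union_sdiff_of_subset hBA]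
    · have hmem' : ∀ D, D ∈ insert B PS ∪ CS ↔ D = B ∨ D ∈ PS ∪ CS := by
        intro D; simp [Finset.mem_insert, Finset.mem_union]
      intro C hC C' hC' hne'
      rcases (hmem' C).mp hC with rfl | hC2
      · rcases (hmem' C').mp hC' with rfl | hC2'
        · exact absurd rfl hne'
        · exact (Finset.sdiff_disjoint.symm).mono_right (hsub C' hC2')
      · rcases (hmem' C').mp hC' with rfl | hC2'
        · exact ((Finset.sdiff_disjoint.symm).mono_right (hsub C hC2)).symm
        · exact h4 C hC2 C' hC2' hne'
    · rw [Finset.card_insert_of_notMem hBPS]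
      calc 2 * (PS.card + 1) = 2 * PS.card + 2 := by ring
        _ = (∑ w : V, Nat.dist (((A \ B).filter fun e => s e = w).card)
              (((A \ B).filter fun e => t e = w).card))
            + (∑ w : V, if w = a ∨ w = b then (1 : ℕ) else 0) := by rw [← h5, hsum2]
        _ = ∑ w : V, (Nat.dist (((A \ B).filter fun e => s e = w).card)
              (((A \ B).filter fun e => t e = w).card)
            + if w = a ∨ w = b then (1 : ℕ) else 0) := (Finset.sum_add_distrib).symm
        _ = ∑ w : V, Nat.dist ((A.filter fun e => s e = w).card)
              ((A.filter fun e => t e = w).card) := by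
            exact Finset.sum_congr rfl fun w _ => (key w).symm

end Aux

/-- Every finite directed multigraph (no loops) admits a path-cycle decomposition:
the edges partition into edge-disjoint directed paths and directed cycles, where the
number of paths is half the sum over vertices of `|outdegree − indegree|`. -/
theorem stmt_6 {V E : Type*} [Fintype V] [Fintype E] [DecidableEq V] [DecidableEq E]
    (s t : E → V) (hloop : ∀ e, s e ≠ t e) :
    ∃ PS CS : Finset (Finset E),
      (∀ B ∈ PS, IsDirPath s t B) ∧
      (∀ B ∈ CS, IsDirCycle s t B) ∧
      (PS ∪ CS).biUnion id = Finset.univ ∧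
      (∀ B ∈ PS ∪ CS, ∀ B' ∈ PS ∪ CS, B ≠ B' → Disjoint B B') ∧
      2 * PS.card = ∑ v : V, Nat.dist
        (Finset.univ.filter fun e => s e = v).card
        (Finset.univ.filter fun e => t e = v).card := by
  exact decomp s t hloop Finset.univ
end
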